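/- Let h_j (j ∈ ℕ) and h be caloric functions on ℝ^{n+1} (n ≥ 1) with h_j(0̄) = h(0̄) = 0, and suppose h_j → h uniformly on every compact subset of ℝ^{n+1}. Then the associated caloric measures converge weakly: ∫ f dω_{h_j} → ∫ f dω_h for every continuous compactly supported f : ℝ^{n+1} → ℝ. -/

import Mathlib

open MeasureTheory Filter
open scoped NNReal ENNReal

noncomputable def timeDeriv {n : ℕ} (h : EuclideanSpace ℝ (Fin n) × ℝ → ℝ)
    (p : EuclideanSpace ℝ (Fin n) × ℝ) : ℝ :=
  deriv (fun s => h (p.1, s)) p.2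

noncomputable def spaceLaplacian {n : ℕ} (h : EuclideanSpace ℝ (Fin n) × ℝ → ℝ)
    (p : EuclideanSpace ℝ (Fin n) × ℝ) : ℝ :=
  ∑ i : Fin n, fderiv ℝ
    (fun x => fderiv ℝ (fun y => h (y, p.2)) x (EuclideanSpace.single i 1)) p.1
    (EuclideanSpace.single i 1)

def IsCaloricOn {n : ℕ} (h : EuclideanSpace ℝ (Fin n) × ℝ → ℝ)
    (U : Set (EuclideanSpace ℝ (Fin n) × ℝ)) : Prop :=
  ContDiffOn ℝ (⊤ : ℕ∞) h U ∧ ∀ p ∈ U, spaceLaplacian h p = timeDeriv h p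
def IsCaloricMeasureOf {n : ℕ} (h : EuclideanSpace ℝ (Fin n) × ℝ → ℝ)
    (ω : MeasureTheory.Measure (EuclideanSpace ℝ (Fin n) × ℝ)) : Prop :=
  MeasureTheory.IsFiniteMeasureOnCompacts ω ∧
  ∀ φ : EuclideanSpace ℝ (Fin n) × ℝ → ℝ, ContDiff ℝ (⊤ : ℕ∞) φ → HasCompactSupport φ →
    ∫ p, φ p ∂ω = (1 / 2) * ∫ p, |h p| * (spaceLaplacian φ p + timeDeriv φ p)

def WeakConvSeq {n : ℕ} (μs : ℕ → Measure (EuclideanSpace ℝ (Fin n) × ℝ))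
    (ν : Measure (EuclideanSpace ℝ (Fin n) × ℝ)) : Prop :=
  ∀ f : EuclideanSpace ℝ (Fin n) × ℝ → ℝ, Continuous f → HasCompactSupport f →
    Tendsto (fun i => ∫ p, f p ∂(μs i)) atTop (nhds (∫ p, f p ∂ν))

/- ### Auxiliary material -/

open Topology Metric
open scoped Pointwise Convolution

section Aux

variable {n : ℕ}
local notation "Pt" => (EuclideanSpace ℝ (Fin n) × ℝ)

instance : (volume : Measure Pt).IsAddHaarMeasure :=
  Measure.prod.instIsAddHaarMeasure _ _

instance : (volume : Measure Pt).IsNegInvariant :=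
  Measure.IsAddHaarMeasure.isNegInvariant_of_regular _

lemma timeDeriv_eq (φ : Pt → ℝ) (hφ : ContDiff ℝ (⊤:ℕ∞) φ) (p : Pt) :
    timeDeriv φ p = fderiv ℝ φ p (0, 1) := by
  have h1 : HasDerivAt (fun s : ℝ => ((p.1, s) : Pt)) ((0 : EuclideanSpace ℝ (Fin n)), (1:ℝ)) p.2 :=
    (hasDerivAt_const p.2 p.1).prodMk (hasDerivAt_id p.2)
  have h2 : HasDerivAt (fun s => φ (p.1, s)) (fderiv ℝ φ p (0, 1)) p.2 := by
    have := (hφ.differentiable (by simp) p).hasFDerivAt.comp_hasDerivAt p.2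
      (by simpa using h1)
    exact this
  exact h2.deriv

lemma spaceLaplacian_eq (φ : Pt → ℝ) (hφ : ContDiff ℝ (⊤:ℕ∞) φ) (p : Pt) :
    spaceLaplacian φ p = ∑ i : Fin n,
      fderiv ℝ (fun q : Pt => fderiv ℝ φ q (EuclideanSpace.single i 1, 0)) p
        (EuclideanSpace.single i 1, 0) := by
  unfold spaceLaplacian
  refine Finset.sum_congr rfl fun i _ => ?_
  have key : ∀ t : ℝ, ∀ x : EuclideanSpace ℝ (Fin n),
      fderiv ℝ (fun y => φ (y, t)) x (EuclideanSpace.single i 1)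
        = fderiv ℝ φ (x, t) (EuclideanSpace.single i 1, 0) := by
    intro t x
    have hι : HasFDerivAt (fun y : EuclideanSpace ℝ (Fin n) => ((y, t) : Pt))
        (ContinuousLinearMap.inl ℝ (EuclideanSpace ℝ (Fin n)) ℝ) x :=
      (hasFDerivAt_id x).prodMk (hasFDerivAt_const t x)
    have := ((hφ.differentiable (by simp) (x, t)).hasFDerivAt.comp x hι).fderiv
    rw [show (fun y => φ (y, t)) = φ ∘ (fun y : EuclideanSpace ℝ (Fin n) => ((y, t) : Pt)) from rfl,
      this]
    rfl
  have hG : ∀ x, (fun x => fderiv ℝ (fun y => φ (y, p.2)) x (EuclideanSpace.single i 1)) x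
      = ((fun q : Pt => fderiv ℝ φ q (EuclideanSpace.single i 1, 0)) ∘
        (fun x : EuclideanSpace ℝ (Fin n) => ((x, p.2) : Pt))) x := fun x => key p.2 x
  rw [funext hG]
  have hGd : Differentiable ℝ (fun q : Pt => fderiv ℝ φ q (EuclideanSpace.single i 1, 0)) := by
    have : ContDiff ℝ (⊤:ℕ∞) (fun q : Pt => fderiv ℝ φ q) := hφ.fderiv_right (by norm_cast)
    exact (this.clm_apply contDiff_const).differentiable (by simp)
  have hι : HasFDerivAt (fun y : EuclideanSpace ℝ (Fin n) => ((y, p.2) : Pt))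
      (ContinuousLinearMap.inl ℝ (EuclideanSpace ℝ (Fin n)) ℝ) p.1 :=
    (hasFDerivAt_id p.1).prodMk (hasFDerivAt_const p.2 p.1)
  rw [((hGd (p.1, p.2)).hasFDerivAt.comp p.1 hι).fderiv]
  rfl

lemma gprop (φ : Pt → ℝ) (hφ : ContDiff ℝ (⊤:ℕ∞) φ) (hφc : HasCompactSupport φ) :
    Continuous (fun p : Pt => spaceLaplacian φ p + timeDeriv φ p) ∧
    HasCompactSupport (fun p : Pt => spaceLaplacian φ p + timeDeriv φ p) := by
  have hre : (fun p : Pt => spaceLaplacian φ p + timeDeriv φ p)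
      = fun p : Pt => (∑ i : Fin n,
          fderiv ℝ (fun q : Pt => fderiv ℝ φ q (EuclideanSpace.single i 1, 0)) p
            (EuclideanSpace.single i 1, 0)) + fderiv ℝ φ p (0, 1) := by
    funext p; rw [spaceLaplacian_eq φ hφ p, timeDeriv_eq φ hφ p]
  have hGsm : ∀ v : Pt, ContDiff ℝ (⊤:ℕ∞) (fun q : Pt => fderiv ℝ φ q v) :=
    fun v => (hφ.fderiv_right (by norm_cast)).clm_apply contDiff_const
  have hcont : Continuous (fun p : Pt => spaceLaplacian φ p + timeDeriv φ p) := by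
    rw [hre]
    refine Continuous.add (continuous_finset_sum _ fun i _ => ?_) ?_
    · exact ((hGsm _).continuous_fderiv (by simp)).clm_apply continuous_const
    · exact (hφ.continuous_fderiv (by simp)).clm_apply continuous_const
  refine ⟨hcont, ?_⟩
  rw [hre]
  refine HasCompactSupport.intro hφc fun p hp => ?_
  have hGsupp : ∀ v : Pt, tsupport (fun q : Pt => fderiv ℝ φ q v) ⊆ tsupport φ := by
    intro v
    refine closure_minimal (fun q hq => ?_) isClosed_closure
    have : fderiv ℝ φ q ≠ 0 := fun h0 => hq (by simp [Function.mem_support, h0])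
    exact support_fderiv_subset ℝ this
  have hz1 : fderiv ℝ φ p ((0 : EuclideanSpace ℝ (Fin n)), (1:ℝ)) = 0 := by
    have : fderiv ℝ φ p = 0 := by
      by_contra hne
      exact hp (support_fderiv_subset ℝ hne)
    simp [this]
  have hz2 : ∀ i : Fin n,
      fderiv ℝ (fun q : Pt => fderiv ℝ φ q (EuclideanSpace.single i 1, 0)) p
        (EuclideanSpace.single i 1, 0) = 0 := by
    intro i
    have : fderiv ℝ (fun q : Pt => fderiv ℝ φ q (EuclideanSpace.single i 1, 0)) p = 0 := by
      by_contra hne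
      exact hp (hGsupp _ (support_fderiv_subset ℝ hne))
    simp [this]
  simp [hz1, hz2]

lemma smooth_tendsto
    (hs : ℕ → Pt → ℝ) (h : Pt → ℝ)
    (hsc : ∀ j, Continuous (hs j)) (hc : Continuous h)
    (hconv : ∀ K : Set Pt, IsCompact K → TendstoUniformlyOn (fun j => hs j) h atTop K)
    (g : Pt → ℝ) (hgc : Continuous g) (hgs : HasCompactSupport g) :
    Tendsto (fun j => ∫ p : Pt, |hs j p| * g p) atTop (𝓝 (∫ p : Pt, |h p| * g p)) := by
  set K := tsupport g with hK
  have hKc : IsCompact K := hgs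
  refine tendsto_integral_filter_of_dominated_convergence
    (fun p => (|h p| + 1) * |g p|) ?_ ?_ ?_ ?_
  · exact Eventually.of_forall fun j =>
      (((hsc j).abs.mul hgc)).aestronglyMeasurable
  · have := (Metric.tendstoUniformlyOn_iff.mp (hconv K hKc)) 1 one_pos
    filter_upwards [this] with j hj
    refine ae_of_all _ fun p => ?_
    by_cases hp : p ∈ K
    · have h1 : |hs j p| ≤ |h p| + 1 := by
        have h2 := hj p hp
        rw [Real.dist_eq, abs_sub_comm] at h2
        have h3 := abs_sub_abs_le_abs_sub (hs j p) (h p)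
        linarith
      calc ‖|hs j p| * g p‖ = |hs j p| * |g p| := by
            rw [Real.norm_eq_abs, abs_mul, abs_abs]
        _ ≤ (|h p| + 1) * |g p| := by
            exact mul_le_mul_of_nonneg_right h1 (abs_nonneg _)
    · have hgp : g p = 0 := image_eq_zero_of_notMem_tsupport hp
      simp only [hgp, mul_zero, norm_zero, abs_zero]
      positivity
  · refine Continuous.integrable_of_hasCompactSupport
      ((hc.abs.add continuous_const).mul hgc.abs) ?_
    refine HasCompactSupport.intro hKc fun p hp => ?_
    have : g p = 0 := image_eq_zero_of_notMem_tsupport hp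
    simp [this]
  · refine ae_of_all _ fun p => ?_
    have hpt : Tendsto (fun j => hs j p) atTop (𝓝 (h p)) :=
      (hconv {p} isCompact_singleton).tendsto_at rfl
    exact (hpt.abs).mul_const _

lemma approx (f : Pt → ℝ) (hf : Continuous f) (hfc : HasCompactSupport f)
    {R ε : ℝ} (hsupp : tsupport f ⊆ ball 0 R) (hε : 0 < ε) :
    ∃ φ : Pt → ℝ, ContDiff ℝ (⊤:ℕ∞) φ ∧ HasCompactSupport φ ∧
      tsupport φ ⊆ closedBall 0 (R + 1) ∧ ∀ x, |φ x - f x| ≤ ε := by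
  have huc : UniformContinuous f := hfc.uniformContinuous_of_continuous hf
  obtain ⟨δ, hδ, hδf⟩ := Metric.uniformContinuous_iff.mp huc ε hε
  set r : ℝ := min δ 1 with hr
  have hr0 : 0 < r := lt_min hδ one_pos
  set bump : ContDiffBump (0 : Pt) := ⟨r / 2, r, by positivity, by linarith⟩ with hbump
  have hbr : bump.rOut = r := rfl
  set φ : Pt → ℝ := bump.normed volume ⋆[ContinuousLinearMap.lsmul ℝ ℝ, volume] f with hφdef
  have hsm : ContDiff ℝ (⊤:ℕ∞) φ :=
    bump.hasCompactSupport_normed.contDiff_convolution_left _ bump.contDiff_normed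
      (hf.locallyIntegrable)
  have hsub : tsupport φ ⊆ closedBall 0 (R + 1) := by
    have h1 : Function.support φ ⊆ Function.support (bump.normed volume) + Function.support f :=
      support_convolution_subset _
    have h2 : Function.support (bump.normed volume) + Function.support f
        ⊆ ball (0 : Pt) r + ball (0 : Pt) R := by
      refine Set.add_subset_add ?_ ?_
      · rw [bump.support_normed_eq]
      · exact (subset_tsupport f).trans hsupp
    have h3 : ball (0 : Pt) r + ball (0 : Pt) R ⊆ ball (0 : Pt) (R + 1) := by
      rintro x ⟨a, ha, b, hb, rfl⟩
      simp only [mem_ball, dist_zero_right] at *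
      calc ‖a + b‖ ≤ ‖a‖ + ‖b‖ := norm_add_le _ _
        _ < R + 1 := by
            have : r ≤ 1 := min_le_right _ _
            linarith
    exact closure_minimal ((h1.trans h2).trans h3 |>.trans ball_subset_closedBall)
      Metric.isClosed_closedBall
  have hcs : HasCompactSupport φ :=
    IsCompact.of_isClosed_subset (isCompact_closedBall _ _) isClosed_closure hsub
  refine ⟨φ, hsm, hcs, hsub, fun x => ?_⟩
  have hb : ∀ y ∈ ball x bump.rOut, dist (f y) (f x) ≤ ε := by
    intro y hy
    rw [mem_ball, hbr] at hy
    exact (hδf (lt_of_lt_of_le hy (min_le_left _ _))).le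
  have h4 := bump.dist_normed_convolution_le (g := f) (μ := volume)
    hf.aestronglyMeasurable hb
  rw [Real.dist_eq] at h4
  exact h4

end Aux

/-- If caloric functions `h_j` vanishing at the origin converge to `h`
uniformly on compact sets, then the associated caloric measures converge weakly. -/
theorem caloricMeasures_weak_convergence {n : ℕ} (hn : 1 ≤ n)
    (hs : ℕ → EuclideanSpace ℝ (Fin n) × ℝ → ℝ) (h : EuclideanSpace ℝ (Fin n) × ℝ → ℝ)
    (hcals : ∀ j, IsCaloricOn (hs j) Set.univ) (hcal : IsCaloricOn h Set.univ)
    (h0s : ∀ j, hs j 0 = 0) (h0 : h 0 = 0)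
    (hconv : ∀ K : Set (EuclideanSpace ℝ (Fin n) × ℝ), IsCompact K →
      TendstoUniformlyOn (fun j => hs j) h atTop K)
    (ωs : ℕ → Measure (EuclideanSpace ℝ (Fin n) × ℝ))
    (ω : Measure (EuclideanSpace ℝ (Fin n) × ℝ))
    (hωs : ∀ j, IsCaloricMeasureOf (hs j) (ωs j)) (hω : IsCaloricMeasureOf h ω) :
    WeakConvSeq ωs ω := by
  classical
  haveI : IsFiniteMeasureOnCompacts ω := hω.1
  haveI : ∀ j, IsFiniteMeasureOnCompacts (ωs j) := fun j => (hωs j).1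
  have hsc : ∀ j, Continuous (hs j) := fun j => by
    exact continuousOn_univ.mp (hcals j).1.continuousOn
  have hc : Continuous h := by
    exact continuousOn_univ.mp hcal.1.continuousOn
  -- step 1: weak convergence against smooth compactly supported test functions
  have key : ∀ φ : EuclideanSpace ℝ (Fin n) × ℝ → ℝ, ContDiff ℝ (⊤ : ℕ∞) φ →
      HasCompactSupport φ →
      Tendsto (fun j => ∫ p, φ p ∂(ωs j)) atTop (𝓝 (∫ p, φ p ∂ω)) := by
    intro φ hφ hφc
    obtain ⟨hgc, hgs⟩ := gprop φ hφ hφc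
    have ht := (smooth_tendsto hs h hsc hc hconv _ hgc hgs).const_mul (1/2 : ℝ)
    have heq : (fun j => ∫ p, φ p ∂(ωs j))
        = fun j => (1/2 : ℝ) * ∫ p, |hs j p| * (spaceLaplacian φ p + timeDeriv φ p) :=
      funext fun j => (hωs j).2 φ hφ hφc
    rw [heq, hω.2 φ hφ hφc]
    exact ht
  intro f hf hfc
  -- geometry: a ball containing the support of `f`
  obtain ⟨R, hR0, hRsub⟩ := hfc.isBounded.subset_ball_lt 0 0
  set B : Set (EuclideanSpace ℝ (Fin n) × ℝ) := Metric.closedBall 0 (R + 1) with hB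
  have hBc : IsCompact B := isCompact_closedBall _ _
  -- a smooth cutoff dominating the indicator of `B`
  set bigbump : ContDiffBump (0 : EuclideanSpace ℝ (Fin n) × ℝ) :=
    ⟨R + 1, R + 2, by linarith, by linarith⟩ with hbig
  have hψsm : ContDiff ℝ (⊤ : ℕ∞) (⇑bigbump) := bigbump.contDiff
  have hψcs : HasCompactSupport (⇑bigbump) := bigbump.hasCompactSupport
  -- uniform bound on masses of `B`
  have hmass : ∀ μ : Measure (EuclideanSpace ℝ (Fin n) × ℝ), IsFiniteMeasureOnCompacts μ →
      (μ B).toReal ≤ ∫ p, bigbump p ∂μ := by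
    intro μ hμ
    haveI := hμ
    have hint : Integrable (⇑bigbump) μ :=
      bigbump.continuous.integrable_of_hasCompactSupport hψcs
    have hii : Integrable (B.indicator fun _ => (1:ℝ)) μ := by
      rw [integrable_indicator_iff hBc.isClosed.measurableSet]
      exact integrableOn_const hBc.measure_lt_top.ne
    have hle : ∀ p, (B.indicator fun _ => (1:ℝ)) p ≤ bigbump p := by
      intro p
      by_cases hp : p ∈ B
      · rw [Set.indicator_of_mem hp]
        exact le_of_eq (bigbump.one_of_mem_closedBall hp).symm
      · rw [Set.indicator_of_notMem hp]
        exact bigbump.nonneg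
    have := integral_mono hii hint hle
    rwa [integral_indicator_const _ hBc.isClosed.measurableSet, smul_eq_mul, mul_one] at this
  -- the `ψ`-integrals against `ωs j` are bounded
  obtain ⟨C, hC⟩ := (key _ hψsm hψcs).bddAbove_range
  have hCb : ∀ j, ∫ p, bigbump p ∂(ωs j) ≤ C := fun j => hC ⟨j, rfl⟩
  set M : ℝ := max C (∫ p, bigbump p ∂ω) + 1 with hM
  have hM0 : 0 < M := by
    have h1 : (0:ℝ) ≤ ∫ p, bigbump p ∂(ωs 0) := by
      refine integral_nonneg fun p => bigbump.nonneg
    have := hCb 0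
    have : (0:ℝ) ≤ C := le_trans h1 this
    have := le_max_left C (∫ p, bigbump p ∂ω)
    simp only [hM]
    linarith
  have hmassj : ∀ j, ((ωs j) B).toReal ≤ M := fun j =>
    le_trans (hmass _ (hωs j).1) (le_trans (hCb j) (by simp only [hM]; nlinarith [le_max_left C (∫ p, bigbump p ∂ω)]))
  have hmassω : (ω B).toReal ≤ M :=
    le_trans (hmass _ hω.1) (by simp only [hM]; nlinarith [le_max_right C (∫ p, bigbump p ∂ω)])
  -- ε-argument
  rw [Metric.tendsto_nhds]
  intro ε hε
  have hε' : 0 < ε / (3 * M) := by positivity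
  obtain ⟨φ, hφsm, hφcs, hφsub, hφap⟩ := approx f hf hfc hRsub hε'
  -- difference estimate against any finite-on-compacts measure
  have hdiff : ∀ μ : Measure (EuclideanSpace ℝ (Fin n) × ℝ), IsFiniteMeasureOnCompacts μ →
      |(∫ p, f p ∂μ) - ∫ p, φ p ∂μ| ≤ ε / (3 * M) * (μ B).toReal := by
    intro μ hμ
    haveI := hμ
    have hif : Integrable f μ := hf.integrable_of_hasCompactSupport hfc
    have hiφ : Integrable φ μ :=
      (hφsm.continuous).integrable_of_hasCompactSupport hφcs
    rw [← integral_sub hif hiφ]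
    have hz : ∀ p, p ∉ B → f p - φ p = 0 := by
      intro p hp
      have hf0 : f p = 0 := by
        refine image_eq_zero_of_notMem_tsupport fun hin => hp ?_
        exact Metric.ball_subset_closedBall (Metric.ball_subset_ball (by linarith) (hRsub hin))
      have hφ0 : φ p = 0 := image_eq_zero_of_notMem_tsupport fun hin => hp (hφsub hin)
      rw [hf0, hφ0, sub_zero]
    rw [← setIntegral_eq_integral_of_forall_compl_eq_zero hz]
    have := norm_setIntegral_le_of_norm_le_const (μ := μ) (s := B) (f := fun p => f p - φ p)
      hBc.measure_lt_top (fun p _ => by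
        rw [Real.norm_eq_abs, abs_sub_comm]; exact hφap p)
    rw [Real.norm_eq_abs, measureReal_def] at this
    linarith [this]
  have hev := (Metric.tendsto_nhds.mp (key φ hφsm hφcs)) (ε/3) (by positivity)
  filter_upwards [hev] with j hj
  have h1 := hdiff (ωs j) (hωs j).1
  have h2 := hdiff ω hω.1
  have hb1 : ε / (3 * M) * ((ωs j) B).toReal ≤ ε / 3 := by
    have := hmassj j
    have hnn : (0:ℝ) ≤ ((ωs j) B).toReal := ENNReal.toReal_nonneg
    calc ε / (3 * M) * ((ωs j) B).toReal ≤ ε / (3 * M) * M :=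
          mul_le_mul_of_nonneg_left this (by positivity)
      _ = ε / 3 := by field_simp
  have hb2 : ε / (3 * M) * (ω B).toReal ≤ ε / 3 := by
    have hnn : (0:ℝ) ≤ (ω B).toReal := ENNReal.toReal_nonneg
    calc ε / (3 * M) * (ω B).toReal ≤ ε / (3 * M) * M :=
          mul_le_mul_of_nonneg_left hmassω (by positivity)
      _ = ε / 3 := by field_simp
  have htri : dist (∫ p, f p ∂(ωs j)) (∫ p, f p ∂ω)
      ≤ |(∫ p, f p ∂(ωs j)) - ∫ p, φ p ∂(ωs j)| + |(∫ p, φ p ∂(ωs j)) - ∫ p, φ p ∂ω|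
        + |(∫ p, f p ∂ω) - ∫ p, φ p ∂ω| := by
    rw [Real.dist_eq]
    calc |(∫ p, f p ∂(ωs j)) - ∫ p, f p ∂ω|
        = |((∫ p, f p ∂(ωs j)) - ∫ p, φ p ∂(ωs j)) + ((∫ p, φ p ∂(ωs j)) - ∫ p, φ p ∂ω)
            + ((∫ p, φ p ∂ω) - ∫ p, f p ∂ω)| := by ring_nf
      _ ≤ |((∫ p, f p ∂(ωs j)) - ∫ p, φ p ∂(ωs j)) + ((∫ p, φ p ∂(ωs j)) - ∫ p, φ p ∂ω)|
            + |(∫ p, φ p ∂ω) - ∫ p, f p ∂ω| := abs_add_le _ _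
      _ ≤ |(∫ p, f p ∂(ωs j)) - ∫ p, φ p ∂(ωs j)| + |(∫ p, φ p ∂(ωs j)) - ∫ p, φ p ∂ω|
            + |(∫ p, φ p ∂ω) - ∫ p, f p ∂ω| := by
              have := abs_add_le ((∫ p, f p ∂(ωs j)) - ∫ p, φ p ∂(ωs j))
                ((∫ p, φ p ∂(ωs j)) - ∫ p, φ p ∂ω)
              linarith
      _ = _ := by rw [abs_sub_comm ((∫ p, φ p ∂ω)) ((∫ p, f p ∂ω))]
  rw [Real.dist_eq] at hj htri ⊢
  linarith
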